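/- arXiv:1512.01995 — 3 statements merged into one kernel-verified Lean document; each statement's English description precedes it below -/
import Mathlib

section
/- Let M₀ be a von Neumann algebra acting on a complex Hilbert space H, let P be a von Neumann subalgebra of M₀, and set N := P' ∩ M₀. Then N equals the set of all a ∈ M₀ such that ρ(a) = a for every unital *-endomorphism ρ of M₀ satisfying ρ(n) = n for all n ∈ N. (Key duality step in Proposition 'the quadruple (N, N^c, C_N, C_{N^c}) is determined by any one of its elements': relative commutants are exactly the fixed-point sets of their fixing endomorphisms.) -/
variable {H : Type*} [NormedAddCommGroup H] [InnerProductSpace ℂ H] [CompleteSpace H]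

/-- A unital *-endomorphism of the von Neumann algebra `M₀`, encoded as a map on bounded
operators on `H` which maps `M₀` into itself and is ℂ-linear, multiplicative, unital and
star-preserving on `M₀`. -/
structure IsVNEndo (M₀ : VonNeumannAlgebra H) (ρ : (H →L[ℂ] H) → (H →L[ℂ] H)) : Prop where
  maps_to : ∀ a ∈ M₀, ρ a ∈ M₀
  map_add : ∀ a ∈ M₀, ∀ b ∈ M₀, ρ (a + b) = ρ a + ρ b
  map_smul : ∀ (c : ℂ), ∀ a ∈ M₀, ρ (c • a) = c • ρ a
  map_mul : ∀ a ∈ M₀, ∀ b ∈ M₀, ρ (a * b) = ρ a * ρ b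
  map_star : ∀ a ∈ M₀, ρ (star a) = star (ρ a)
  map_one : ρ 1 = 1

/-- The relative commutant `S' ∩ M₀` of a set `S` of operators inside a von Neumann
algebra `M₀`. -/
def relComm (M₀ : VonNeumannAlgebra H) (S : Set (H →L[ℂ] H)) : Set (H →L[ℂ] H) :=
  S.centralizer ∩ (M₀ : Set (H →L[ℂ] H))

/-- centralizers in `B(H)` are norm-closed. -/
lemma isClosed_centralizer' (S : Set (H →L[ℂ] H)) : IsClosed (S.centralizer) := by
  have : S.centralizer = ⋂ m ∈ S, {x : H →L[ℂ] H | m * x = x * m} := by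
    ext x; simp [Set.mem_centralizer_iff]
  rw [this]
  exact isClosed_biInter fun m _ => isClosed_eq (by fun_prop) (by fun_prop)

/-- von Neumann algebras are norm-closed. -/
lemma vna_isClosed (M : VonNeumannAlgebra H) : IsClosed (M : Set (H →L[ℂ] H)) := by
  rw [← M.centralizer_centralizer]
  exact isClosed_centralizer' _

/-- cfc of a normal element of a norm-closed star subalgebra stays inside it. -/
lemma cfc_mem_of_isClosed (S : StarSubalgebra ℂ (H →L[ℂ] H)) (hS : IsClosed (S : Set (H →L[ℂ] H)))
    {x : H →L[ℂ] H} (hx : x ∈ S) (hxn : IsStarNormal x) (f : ℂ → ℂ)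
    (hf : ContinuousOn f (spectrum ℂ x)) : cfc f x ∈ S := by
  rw [cfc_apply f x hxn hf, cfcHom_eq_of_isStarNormal, StarAlgHom.comp_apply]
  exact StarAlgebra.elemental.le_of_mem hS hx (SetLike.coe_mem _)

/-- Ad of a unitary of `P` is an endomorphism of `M₀` fixing `N := P' ∩ M₀`, so any `a`
with the fixed-point property commutes with the unitary. -/
lemma commute_of_unitary (M₀ P : VonNeumannAlgebra H)
    (hP : (P : Set (H →L[ℂ] H)) ⊆ (M₀ : Set (H →L[ℂ] H)))
    {a : H →L[ℂ] H}
    (ha : ∀ ρ : (H →L[ℂ] H) → (H →L[ℂ] H), IsVNEndo M₀ ρ →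
          (∀ n ∈ relComm M₀ (P : Set (H →L[ℂ] H)), ρ n = n) → ρ a = a)
    {u : H →L[ℂ] H} (huP : u ∈ P) (h1 : u * star u = 1) (h2 : star u * u = 1) :
    u * a = a * u := by
  set ρ : (H →L[ℂ] H) → (H →L[ℂ] H) := fun x => u * x * star u with hρ
  have huM : u ∈ M₀ := hP huP
  have hend : IsVNEndo M₀ ρ := by
    constructor
    · intro b _
      exact mul_mem (mul_mem huM (by exact_mod_cast ‹b ∈ M₀›)) (star_mem huM)
    · intro b _ c _; simp only [hρ, mul_add, add_mul]
    · intro c b _; simp only [hρ, mul_smul_comm, smul_mul_assoc]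
    · intro b _ c _
      simp only [hρ, mul_assoc]
      rw [← mul_assoc (star u) u, h2, one_mul]
    · intro b _; simp only [hρ, star_mul, star_star, mul_assoc]
    · simp only [hρ, mul_one, h1]
  have hfix : ∀ n ∈ relComm M₀ (P : Set (H →L[ℂ] H)), ρ n = n := by
    intro n hn
    have hcomm : u * n = n * u := hn.1 u huP
    show u * n * star u = n
    rw [hcomm, mul_assoc, h1, mul_one]
  have hfixed : u * a * star u = a := ha ρ hend hfix
  calc u * a = u * a * (star u * u) := by rw [h2, mul_one]
    _ = (u * a * star u) * u := by simp only [mul_assoc]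
    _ = a * u := by rw [hfixed]

lemma commute_of_selfAdjoint (M₀ P : VonNeumannAlgebra H)
    (hP : (P : Set (H →L[ℂ] H)) ⊆ (M₀ : Set (H →L[ℂ] H)))
    {a : H →L[ℂ] H}
    (ha : ∀ ρ : (H →L[ℂ] H) → (H →L[ℂ] H), IsVNEndo M₀ ρ →
          (∀ n ∈ relComm M₀ (P : Set (H →L[ℂ] H)), ρ n = n) → ρ a = a)
    {x : H →L[ℂ] H} (hxP : x ∈ P) (hx : IsSelfAdjoint x) :
    x * a = a * x := by
  rcases eq_or_ne x 0 with rfl | hx0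
  · simp
  -- normalize
  set y : H →L[ℂ] H := ((‖x‖ : ℂ)⁻¹) • x with hy
  have hr : (0:ℝ) < ‖x‖ := norm_pos_iff.mpr hx0
  have hyP : y ∈ P :=
    show y ∈ P.toStarSubalgebra from SMulMemClass.smul_mem _ hxP
  have hysa : IsSelfAdjoint y := by
    rw [hy, IsSelfAdjoint, star_smul, hx.star_eq]
    congr 1
    simp [Complex.ext_iff]
  have hyn : IsStarNormal y := hysa.isStarNormal
  have hspec : ∀ z ∈ spectrum ℂ y, z = (z.re : ℂ) ∧ z.re ^ 2 ≤ 1 := by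
    intro z hz
    have hre : z = (z.re : ℂ) := hysa.mem_spectrum_eq_re hz
    refine ⟨hre, ?_⟩
    have hnorm : ‖z‖ ≤ ‖y‖ * ‖(1 : H →L[ℂ] H)‖ := spectrum.norm_le_norm_mul_of_mem hz
    have hynorm : ‖y‖ ≤ 1 := by
      rw [hy, norm_smul]
      simp only [norm_inv, Complex.norm_real, norm_norm]
      rw [inv_mul_cancel₀ hr.ne']
    have hynorm' : ‖y‖ * ‖(1 : H →L[ℂ] H)‖ ≤ 1 := by
      calc ‖y‖ * ‖(1 : H →L[ℂ] H)‖ ≤ 1 * 1 :=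
            mul_le_mul hynorm ContinuousLinearMap.norm_id_le (norm_nonneg _)
              (by linarith [norm_nonneg y])
        _ = 1 := by ring
    have h1 : ‖z‖ ≤ 1 := le_trans hnorm hynorm'
    rw [hre] at h1
    simp only [Complex.norm_real, Real.norm_eq_abs] at h1
    nlinarith [abs_nonneg z.re, sq_abs z.re]
  -- the unitary
  set f : ℂ → ℂ := fun z => (z.re : ℂ) + Complex.I * (Real.sqrt (1 - z.re ^ 2) : ℝ) with hf
  have hfc : Continuous f := by fun_prop
  set u : H →L[ℂ] H := cfc f y with hu
  have huP : u ∈ P := cfc_mem_of_isClosed P.toStarSubalgebra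
    (by simpa using vna_isClosed P) hyP hyn f hfc.continuousOn
  have hstaru : star u = cfc (fun z => star (f z)) y := (cfc_star f y).symm
  have hmul : ∀ z ∈ spectrum ℂ y, f z * star (f z) = 1 := by
    intro z hz
    obtain ⟨hre, hsq⟩ := hspec z hz
    have hs : ((Real.sqrt (1 - z.re ^ 2) : ℝ) : ℂ) ^ 2 = 1 - (z.re : ℂ) ^ 2 := by
      rw [← Complex.ofReal_pow, Real.sq_sqrt (by linarith)]
      push_cast; ring
    have hstar : star (f z) = (z.re : ℂ) - Complex.I * (Real.sqrt (1 - z.re ^ 2) : ℝ) := by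
      simp only [hf, star_add, star_mul', Complex.star_def, Complex.conj_ofReal, Complex.conj_I]
      ring
    rw [hstar]
    simp only [hf]
    rw [show ((z.re : ℂ) + Complex.I * (Real.sqrt (1 - z.re ^ 2) : ℝ)) *
        ((z.re : ℂ) - Complex.I * (Real.sqrt (1 - z.re ^ 2) : ℝ)) =
        (z.re : ℂ) ^ 2 - Complex.I ^ 2 * ((Real.sqrt (1 - z.re ^ 2) : ℝ) : ℂ) ^ 2 from by ring]
    rw [Complex.I_sq, hs]
    ring
  have h1 : u * star u = 1 := by
    rw [hu, hstaru, ← cfc_mul _ _ y hfc.continuousOn (by fun_prop)]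
    rw [cfc_congr hmul]
    exact cfc_one ℂ y
  have h2 : star u * u = 1 := by
    rw [hu, hstaru, ← cfc_mul _ _ y (by fun_prop) hfc.continuousOn]
    have : ∀ z ∈ spectrum ℂ y, star (f z) * f z = 1 := fun z hz => by
      rw [mul_comm]; exact hmul z hz
    rw [cfc_congr this]
    exact cfc_one ℂ y
  have hsum : u + star u = (2:ℂ) • y := by
    rw [hu, hstaru, ← cfc_add y _ _ hfc.continuousOn (by fun_prop)]
    have heq : ∀ z ∈ spectrum ℂ y, f z + star (f z) = ((2:ℂ) • · : ℂ → ℂ) z := by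
      intro z hz
      obtain ⟨hre, _⟩ := hspec z hz
      simp only [hf, star_add, star_mul', Complex.star_def, Complex.conj_ofReal, Complex.conj_I,
        smul_eq_mul]
      conv_rhs => rw [hre]
      push_cast
      ring
    rw [cfc_congr heq]
    exact cfc_smul_id (2:ℂ) y hyn
  -- a commutes with u and star u
  have hcu : u * a = a * u := commute_of_unitary M₀ P hP ha huP h1 h2
  have hcsu : star u * a = a * star u := by
    refine commute_of_unitary M₀ P hP ha (star_mem (show u ∈ P.toStarSubalgebra from huP)) ?_ ?_
    · rw [star_star]; exact h2
    · rw [star_star]; exact h1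
  -- conclude
  have hyc : y * a = a * y := by
    have h2ne : (2:ℂ) ≠ 0 := two_ne_zero
    have : ((2:ℂ) • y) * a = a * ((2:ℂ) • y) := by
      rw [← hsum, add_mul, mul_add, hcu, hcsu]
    rw [smul_mul_assoc, mul_smul_comm] at this
    exact smul_right_injective _ h2ne this
  have : x = (‖x‖ : ℂ) • y := by
    rw [hy, smul_smul]
    rw [mul_inv_cancel₀ (by exact_mod_cast hr.ne')]
    simp
  rw [this, smul_mul_assoc, mul_smul_comm, hyc]

/-- For a von Neumann subalgebra `P ⊆ M₀`, the relative commutant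
`N := P' ∩ M₀` equals the set of all `a ∈ M₀` fixed by every unital *-endomorphism of `M₀`
that fixes `N` pointwise. -/
theorem relComm_eq_fixedPoints_of_fixing_endos
    (M₀ P : VonNeumannAlgebra H) (hP : (P : Set (H →L[ℂ] H)) ⊆ (M₀ : Set (H →L[ℂ] H))) :
    relComm M₀ (P : Set (H →L[ℂ] H)) =
      {a : H →L[ℂ] H | a ∈ M₀ ∧
        ∀ ρ : (H →L[ℂ] H) → (H →L[ℂ] H), IsVNEndo M₀ ρ →
          (∀ n ∈ relComm M₀ (P : Set (H →L[ℂ] H)), ρ n = n) → ρ a = a} := by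
  ext a
  constructor
  · intro haN
    exact ⟨haN.2, fun ρ _ hfix => hfix a haN⟩
  · rintro ⟨haM, ha⟩
    refine ⟨?_, haM⟩
    intro p hpP
    -- decompose p into selfadjoint parts
    set x₁ : H →L[ℂ] H := (2⁻¹ : ℂ) • (p + star p) with hx₁
    set x₂ : H →L[ℂ] H := (-(Complex.I) * 2⁻¹) • (p - star p) with hx₂
    have hpP' : p ∈ P.toStarSubalgebra := hpP
    have hx₁P : x₁ ∈ P :=
      show x₁ ∈ P.toStarSubalgebra from SMulMemClass.smul_mem _ (add_mem hpP' (star_mem hpP'))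
    have hx₂P : x₂ ∈ P :=
      show x₂ ∈ P.toStarSubalgebra from SMulMemClass.smul_mem _ (sub_mem hpP' (star_mem hpP'))
    have hx₁sa : IsSelfAdjoint x₁ := by
      rw [hx₁, IsSelfAdjoint, star_smul, star_add, star_star]
      rw [show star (2⁻¹ : ℂ) = 2⁻¹ by norm_num [Complex.ext_iff]]
      module
    have hx₂sa : IsSelfAdjoint x₂ := by
      rw [hx₂, IsSelfAdjoint, star_smul, star_sub, star_star]
      rw [show star (-(Complex.I) * 2⁻¹) = Complex.I * 2⁻¹ by simp [Complex.ext_iff]]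
      module
    have h1 : x₁ * a = a * x₁ := commute_of_selfAdjoint M₀ P hP ha hx₁P hx₁sa
    have h2 : x₂ * a = a * x₂ := commute_of_selfAdjoint M₀ P hP ha hx₂P hx₂sa
    have hdecomp : p = x₁ + Complex.I • x₂ := by
      rw [hx₁, hx₂, smul_smul]
      simp only [smul_sub, smul_add]
      rw [show Complex.I * (-(Complex.I) * 2⁻¹) = 2⁻¹ from by
        rw [← mul_assoc, mul_neg, Complex.I_mul_I]; ring]
      module
    rw [hdecomp, add_mul, mul_add, h1, smul_mul_assoc, h2]
    simp only [hx₂, mul_smul_comm]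
end

section
/- Let M₀ be a von Neumann algebra on a complex Hilbert space H and N a von Neumann subalgebra with relative commutant N^c := N' ∩ M₀ satisfying biduality (N^c)' ∩ M₀ = N. Let ρ and σ be unital *-endomorphisms of M₀ such that ρ(n) = n for all n ∈ N and σ(m) = m for all m ∈ N^c. Then ρ(σ(a)) = σ(ρ(a)) for every a in the unital *-subalgebra of M₀ generated by N ∪ N^c. (Algebraic core of one inclusion in the proposition '(C_N)^c = C_{N^c}': endomorphisms dual to N and to N^c commute.) -/
variable {H : Type*} [NormedAddCommGroup H] [InnerProductSpace ℂ H] [CompleteSpace H]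

/-- If `N ⊆ M₀` satisfies biduality `(N^c)^c = N`, `ρ` fixes `N` pointwise and
`σ` fixes `N^c` pointwise, then `ρ` and `σ` commute on the unital *-subalgebra of `M₀`
generated by `N ∪ N^c`. -/
theorem endos_dual_to_complements_commute
    (M₀ N : VonNeumannAlgebra H) (hN : (N : Set (H →L[ℂ] H)) ⊆ (M₀ : Set (H →L[ℂ] H)))
    (hbi : relComm M₀ (relComm M₀ (N : Set (H →L[ℂ] H))) = (N : Set (H →L[ℂ] H)))
    (ρ σ : (H →L[ℂ] H) → (H →L[ℂ] H)) (hρ : IsVNEndo M₀ ρ) (hσ : IsVNEndo M₀ σ)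
    (hρfix : ∀ n ∈ N, ρ n = n)
    (hσfix : ∀ m ∈ relComm M₀ (N : Set (H →L[ℂ] H)), σ m = m) :
    ∀ a ∈ StarAlgebra.adjoin ℂ ((N : Set (H →L[ℂ] H)) ∪ relComm M₀ (N : Set (H →L[ℂ] H))),
      ρ (σ a) = σ (ρ a) := by
  intro a ha
  set Nc := relComm M₀ (N : Set (H →L[ℂ] H)) with hNc
  have hNcM : Nc ⊆ (M₀ : Set (H →L[ℂ] H)) := fun x hx => hx.2
  have hsub : (N : Set (H →L[ℂ] H)) ∪ Nc ⊆ (M₀ : Set (H →L[ℂ] H)) :=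
    Set.union_subset hN hNcM
  have hadj : ∀ x ∈ StarAlgebra.adjoin ℂ ((N : Set (H →L[ℂ] H)) ∪ Nc),
      x ∈ (M₀ : Set (H →L[ℂ] H)) := by
    intro x hx
    exact StarAlgebra.adjoin_le (S := M₀.toStarSubalgebra) hsub hx
  -- σ maps N into N
  have hσN : ∀ n ∈ N, σ n ∈ (N : Set (H →L[ℂ] H)) := by
    intro n hn
    rw [← hbi]
    refine ⟨?_, hσ.maps_to n (hN hn)⟩
    intro m hm
    have hmfix := hσfix m hm
    have hcomm : n * m = m * n := hm.1 n hn
    have h1 : σ (n * m) = σ n * m := by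
      rw [hσ.map_mul n (hN hn) m hm.2, hmfix]
    have h2 : σ (m * n) = m * σ n := by
      rw [hσ.map_mul m hm.2 n (hN hn), hmfix]
    rw [← h1, ← h2, hcomm]
  -- ρ maps N^c into N^c
  have hρNc : ∀ m ∈ Nc, ρ m ∈ Nc := by
    intro m hm
    refine ⟨?_, hρ.maps_to m hm.2⟩
    intro n hn
    have hnfix := hρfix n hn
    have hcomm : n * m = m * n := hm.1 n hn
    have h1 : ρ (n * m) = n * ρ m := by
      rw [hρ.map_mul n (hN hn) m hm.2, hnfix]
    have h2 : ρ (m * n) = ρ m * n := by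
      rw [hρ.map_mul m hm.2 n (hN hn), hnfix]
    rw [← h1, ← h2, hcomm]
  induction ha using StarAlgebra.adjoin_induction with
  | mem x hx =>
    rcases hx with hx | hx
    · rw [hρfix x hx, hρfix (σ x) (hσN x hx)]
    · rw [hσfix x hx, hσfix (ρ x) (hρNc x hx)]
  | algebraMap r =>
    have : algebraMap ℂ (H →L[ℂ] H) r = r • (1 : H →L[ℂ] H) := Algebra.algebraMap_eq_smul_one r
    have hσ1 : σ (r • 1) = r • 1 := by rw [hσ.map_smul r 1 M₀.one_mem, hσ.map_one]
    have hρ1 : ρ (r • 1) = r • 1 := by rw [hρ.map_smul r 1 M₀.one_mem, hρ.map_one]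
    rw [this, hσ1, hρ1, hσ1]
  | add x y hx hy ihx ihy =>
    have hxM := hadj x hx; have hyM := hadj y hy
    rw [hρ.map_add x hxM y hyM, hσ.map_add x hxM y hyM,
      hρ.map_add _ (hσ.maps_to x hxM) _ (hσ.maps_to y hyM),
      hσ.map_add _ (hρ.maps_to x hxM) _ (hρ.maps_to y hyM), ihx, ihy]
  | mul x y hx hy ihx ihy =>
    have hxM := hadj x hx; have hyM := hadj y hy
    rw [hρ.map_mul x hxM y hyM, hσ.map_mul x hxM y hyM,
      hρ.map_mul _ (hσ.maps_to x hxM) _ (hσ.maps_to y hyM),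
      hσ.map_mul _ (hρ.maps_to x hxM) _ (hρ.maps_to y hyM), ihx, ihy]
  | star x hx ihx =>
    have hxM := hadj x hx
    rw [hρ.map_star x hxM, hσ.map_star x hxM,
      hρ.map_star _ (hσ.maps_to x hxM), hσ.map_star _ (hρ.maps_to x hxM), ihx]
end

section
/- Let M₀ be a von Neumann algebra on a complex Hilbert space H and N a von Neumann subalgebra with relative commutant N^c := N' ∩ M₀. Let s₁, …, s_k ∈ N satisfy s_a* s_b = δ_{ab}·1 and Σ_a s_a s_a* = 1, and let t₁, …, t_l ∈ N^c satisfy t_b* t_c = δ_{bc}·1 and Σ_b t_b t_b* = 1. Let ρ₁, …, ρ_k be unital *-endomorphisms of M₀ fixing N^c pointwise and σ₁, …, σ_l unital *-endomorphisms of M₀ fixing N pointwise, and define ρ(x) := Σ_a s_a ρ_a(x) s_a* and σ(x) := Σ_b t_b σ_b(x) t_b*. Then Σ_{a,b} σ(s_a) t_b s_a* ρ(t_b*) = 1. (Reducible case of the proposition that braiding triviality between the dual categories C_N and C_{N^c} reduces to finitely many equations: if all braiding operators of the irreducible summands are trivial, the braiding of the direct sums is trivial.) -/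
variable {H : Type*} [NormedAddCommGroup H] [InnerProductSpace ℂ H] [CompleteSpace H]

/-- (Reducible case of braiding triviality reducing to finitely many
equations.) For Cuntz families `s a ∈ N`, `t b ∈ N^c` and direct sums
`ρ(x) = Σ_a s_a ρ_a(x) s_a*`, `σ(x) = Σ_b t_b σ_b(x) t_b*` of endomorphisms fixing `N^c`
resp. `N` pointwise, the braiding operator `Σ_{a,b} σ(s_a) t_b s_a* ρ(t_b*)` is trivial. -/
theorem direct_sum_braiding_trivial
    (M₀ N : VonNeumannAlgebra H) (hN : (N : Set (H →L[ℂ] H)) ⊆ (M₀ : Set (H →L[ℂ] H)))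
    (k l : ℕ)
    (s : Fin k → (H →L[ℂ] H)) (hs : ∀ a, s a ∈ N)
    (t : Fin l → (H →L[ℂ] H)) (ht : ∀ b, t b ∈ relComm M₀ (N : Set (H →L[ℂ] H)))
    (hsorth : ∀ a b, star (s a) * s b = if a = b then (1 : H →L[ℂ] H) else 0)
    (hssum : ∑ a, s a * star (s a) = 1)
    (htorth : ∀ a b, star (t a) * t b = if a = b then (1 : H →L[ℂ] H) else 0)
    (htsum : ∑ b, t b * star (t b) = 1)
    (ρs : Fin k → ((H →L[ℂ] H) → (H →L[ℂ] H))) (hρs : ∀ a, IsVNEndo M₀ (ρs a))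
    (hρfix : ∀ a, ∀ m ∈ relComm M₀ (N : Set (H →L[ℂ] H)), ρs a m = m)
    (σs : Fin l → ((H →L[ℂ] H) → (H →L[ℂ] H))) (hσs : ∀ b, IsVNEndo M₀ (σs b))
    (hσfix : ∀ b, ∀ n ∈ N, σs b n = n) :
    ∑ a, ∑ b, (∑ c, t c * σs c (s a) * star (t c)) * t b * star (s a) *
      (∑ c, s c * ρs c (star (t b)) * star (s c)) = 1 := by
  have hfix1 : ∀ c a, σs c (s a) = s a := fun c a => hσfix c (s a) (hs a)
  have hcent : ∀ b, ∀ n ∈ N, n * t b = t b * n := fun b => (ht b).1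
  have htb' : ∀ b, star (t b) ∈ relComm M₀ (N : Set (H →L[ℂ] H)) := by
    intro b
    refine ⟨fun n hn => ?_, star_mem (ht b).2⟩
    calc n * star (t b) = star (t b * star n) := by simp
      _ = star (star n * t b) := by rw [hcent b (star n) (star_mem hn)]
      _ = star (t b) * n := by simp
  have hfix2 : ∀ c b, ρs c (star (t b)) = star (t b) := fun c b => hρfix c _ (htb' b)
  simp only [hfix1, hfix2]
  have key : ∀ (a : Fin k) (b : Fin l), (∑ c, t c * s a * star (t c)) * t b * star (s a) *
      (∑ c, s c * star (t b) * star (s c)) = t b * star (t b) * (s a * star (s a)) := by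
    intro a b
    have h1 : (∑ c, t c * s a * star (t c)) * t b = t b * s a := by
      rw [Finset.sum_mul]
      have e : ∀ c, t c * s a * star (t c) * t b = if c = b then t b * s a else 0 := by
        intro c
        rw [mul_assoc, htorth c b]
        split <;> simp_all
      simp [e]
    have h2 : star (s a) * (∑ c, s c * star (t b) * star (s c)) =
        star (t b) * star (s a) := by
      rw [Finset.mul_sum]
      have e : ∀ c, star (s a) * (s c * star (t b) * star (s c)) =
          if a = c then star (t b) * star (s a) else 0 := by
        intro c
        rw [← mul_assoc, ← mul_assoc, hsorth a c]
        split <;> simp_all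
      simp [e]
    have hcomm : s a * star (t b) = star (t b) * s a := (htb' b).1 (s a) (hs a)
    calc (∑ c, t c * s a * star (t c)) * t b * star (s a) *
        (∑ c, s c * star (t b) * star (s c))
        = ((∑ c, t c * s a * star (t c)) * t b) *
          (star (s a) * (∑ c, s c * star (t b) * star (s c))) := by
          rw [mul_assoc, mul_assoc]
      _ = (t b * s a) * (star (t b) * star (s a)) := by rw [h1, h2]
      _ = t b * (s a * star (t b)) * star (s a) := by rw [mul_assoc, mul_assoc, mul_assoc]
      _ = t b * (star (t b) * s a) * star (s a) := by rw [hcomm]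
      _ = t b * star (t b) * (s a * star (s a)) := by rw [← mul_assoc, mul_assoc, mul_assoc]
  simp only [key, ← Finset.sum_mul, htsum, one_mul, hssum]
end
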